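/- Let f(θ) = min{κ₀θ², κ₀(θ-θ_p)² + f₀} with κ₀, μ, θ_p > 0, f₀ > 0, and let Φ(θ) = f(θ) + ((d-1)/d)·μ·θ² for an integer d ≥ 2. If θ₁ = (1/2)·(f₀/(κ₀θ_p) + (d-1)μθ_p/(dκ₀ + (d-1)μ)) and θ₂ = θ_p + (1/2)·(f₀/(κ₀θ_p) - (d-1)μθ_p/(dκ₀ + (d-1)μ)) satisfy θ₁ < θ₂, then Φ'(θ₁) = Φ'(θ₂) and Φ(θ₂) - Φ(θ₁) = Φ'(θ₁)·(θ₂ - θ₁). -/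

import Mathlib

set_option maxHeartbeats 1600000

noncomputable section

/-- common tangent conditions for the bi-quadratic potential. -/
theorem stmt2 (d : ℕ) (hd : 2 ≤ d) (κ₀ μ θp f₀ : ℝ)
    (hκ : 0 < κ₀) (hμ : 0 < μ) (hθp : 0 < θp) (hf₀ : 0 < f₀)
    (f : ℝ → ℝ) (hf : ∀ θ, f θ = min (κ₀*θ^2) (κ₀*(θ-θp)^2 + f₀))
    (Φ : ℝ → ℝ) (hΦ : ∀ θ, Φ θ = f θ + (((d:ℝ)-1)/d)*μ*θ^2)
    (θ₁ θ₂ : ℝ)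
    (hθ₁ : θ₁ = (1/2)*(f₀/(κ₀*θp) + ((d:ℝ)-1)*μ*θp/(d*κ₀ + ((d:ℝ)-1)*μ)))
    (hθ₂ : θ₂ = θp + (1/2)*(f₀/(κ₀*θp) - ((d:ℝ)-1)*μ*θp/(d*κ₀ + ((d:ℝ)-1)*μ)))
    (hlt : θ₁ < θ₂) :
    deriv Φ θ₁ = deriv Φ θ₂ ∧ Φ θ₂ - Φ θ₁ = deriv Φ θ₁ * (θ₂ - θ₁) := by
  have hd1 : (1:ℝ) ≤ (d:ℝ) := by exact_mod_cast Nat.one_le_of_lt hd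
  have hdpos : (0:ℝ) < (d:ℝ) := by linarith
  have hdne : (d:ℝ) ≠ 0 := ne_of_gt hdpos
  set c : ℝ := (((d:ℝ)-1)/d)*μ with hc
  have hc0 : 0 ≤ c := by
    apply mul_nonneg _ hμ.le
    apply div_nonneg (by linarith) hdpos.le
  set K : ℝ := (d:ℝ)*κ₀ + ((d:ℝ)-1)*μ with hK
  have hKpos : 0 < K := by
    have : 0 < (d:ℝ)*κ₀ := mul_pos hdpos hκ
    have : 0 ≤ ((d:ℝ)-1)*μ := mul_nonneg (by linarith) hμ.le
    simp only [hK]; nlinarith [mul_pos hdpos hκ]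
  have hKne : K ≠ 0 := ne_of_gt hKpos
  have hκθp : κ₀*θp ≠ 0 := ne_of_gt (mul_pos hκ hθp)
  -- strict branch inequalities
  have hb : ((d:ℝ)-1)*μ*θp/K < θp := by
    rw [div_lt_iff₀ hKpos]
    nlinarith [mul_pos hdpos hκ]
  have hs : 2*(κ₀*θp)*(θp/2 + 1/2*(f₀/(κ₀*θp))) = κ₀*θp^2 + f₀ := by
    field_simp
  have ht1 : θ₁ < θp/2 + 1/2*(f₀/(κ₀*θp)) := by
    rw [hθ₁]
    have : (1/2)*(((d:ℝ)-1)*μ*θp/K) < θp/2 := by linarith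
    linarith
  have ht2 : θp/2 + 1/2*(f₀/(κ₀*θp)) < θ₂ := by
    rw [hθ₂]
    have : (1/2)*(((d:ℝ)-1)*μ*θp/K) < θp/2 := by linarith
    linarith
  have key1 : 2*(κ₀*θp)*θ₁ < κ₀*θp^2 + f₀ := by
    rw [← hs]; exact mul_lt_mul_of_pos_left ht1 (by positivity)
  have key2 : κ₀*θp^2 + f₀ < 2*(κ₀*θp)*θ₂ := by
    rw [← hs]; exact mul_lt_mul_of_pos_left ht2 (by positivity)
  have h1 : κ₀*θ₁^2 < κ₀*(θ₁-θp)^2 + f₀ := by nlinarith [key1]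
  have h2 : κ₀*(θ₂-θp)^2 + f₀ < κ₀*θ₂^2 := by nlinarith [key2]
  -- Φ agrees with smooth branches near θ₁, θ₂
  have hev1 : Φ =ᶠ[nhds θ₁] (fun θ => κ₀*θ^2 + c*θ^2) := by
    have hcont : ∀ᶠ θ in nhds θ₁, κ₀*θ^2 < κ₀*(θ-θp)^2 + f₀ := by
      have c1 : Continuous fun θ : ℝ => κ₀*θ^2 := continuous_const.mul (continuous_pow 2)
      have c2 : Continuous fun θ : ℝ => κ₀*(θ-θp)^2 + f₀ :=
        (continuous_const.mul ((continuous_id.sub continuous_const).pow 2)).add continuous_const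
      exact (c1.continuousAt).eventually_lt (c2.continuousAt) h1
    filter_upwards [hcont] with θ hθ
    rw [hΦ, hf, min_eq_left hθ.le]
  have hev2 : Φ =ᶠ[nhds θ₂] (fun θ => κ₀*(θ-θp)^2 + f₀ + c*θ^2) := by
    have hcont : ∀ᶠ θ in nhds θ₂, κ₀*(θ-θp)^2 + f₀ < κ₀*θ^2 := by
      have c1 : Continuous fun θ : ℝ => κ₀*θ^2 := continuous_const.mul (continuous_pow 2)
      have c2 : Continuous fun θ : ℝ => κ₀*(θ-θp)^2 + f₀ :=
        (continuous_const.mul ((continuous_id.sub continuous_const).pow 2)).add continuous_const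
      exact (c2.continuousAt).eventually_lt (c1.continuousAt) h2
    filter_upwards [hcont] with θ hθ
    rw [hΦ, hf, min_eq_right hθ.le]
  have hD1 : HasDerivAt (fun θ : ℝ => κ₀*θ^2 + c*θ^2) (2*κ₀*θ₁ + 2*c*θ₁) θ₁ := by
    have := ((hasDerivAt_pow 2 θ₁).const_mul κ₀).add ((hasDerivAt_pow 2 θ₁).const_mul c)
    exact this.congr_deriv (by push_cast; ring)
  have hD2 : HasDerivAt (fun θ : ℝ => κ₀*(θ-θp)^2 + f₀ + c*θ^2)
      (2*κ₀*(θ₂-θp) + 2*c*θ₂) θ₂ := by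
    have hpow : HasDerivAt (fun θ : ℝ => (θ-θp)^2) (2*(θ₂-θp)^1*1) θ₂ :=
      ((hasDerivAt_id θ₂).sub_const θp).pow 2
    have := ((hpow.const_mul κ₀).add_const f₀).add ((hasDerivAt_pow 2 θ₂).const_mul c)
    exact this.congr_deriv (by push_cast; ring)
  have e1 : deriv Φ θ₁ = 2*κ₀*θ₁ + 2*c*θ₁ := by
    rw [hev1.deriv_eq, hD1.deriv]
  have e2 : deriv Φ θ₂ = 2*κ₀*(θ₂-θp) + 2*c*θ₂ := by
    rw [hev2.deriv_eq, hD2.deriv]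
  have hceq : c = ((d:ℝ)-1)*μ/d := by rw [hc]; ring
  constructor
  · rw [e1, e2, hθ₁, hθ₂, hceq]
    field_simp
    ring
  · rw [hΦ θ₁, hΦ θ₂, hf θ₁, hf θ₂, min_eq_left h1.le, min_eq_right h2.le, e1]
    rw [hθ₁, hθ₂, hceq]
    field_simp
    ring
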